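/- For every n ∈ ℕ and x_n ∈ X_n, the set Γ_n(x_n) ⊂ Y^ℕ is nonempty and closed in the product topology. -/
import Mathlib


set_option linter.unusedSectionVars false
set_option linter.unusedVariables false

variable {Y : Type}

/-- Iterated embedding φ_{n,m} : X m → X n for m ≤ n. -/
def phiTo (X : ℕ → Type) (φs : ∀ n, X n → X (n + 1)) {m n : ℕ} (h : m ≤ n) (x : X m) : X n :=
  Nat.leRecOn h (fun {k} x => φs k x) x

/-- Iterated projection π_{m,q} : Yᵐ × X q → X (q+m), the head of the word acting outermost. -/
def piFin (X : ℕ → Type) (πo : ∀ n, Y → X n → X (n + 1)) :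
    ∀ (m q : ℕ), (Fin m → Y) → X q → X (q + m)
  | 0, _, _, x => x
  | m + 1, q, y, x => πo (q + m) (y 0) (piFin X πo m q (fun i => y i.succ) x)

/-- Iterated projection π_{m,0} : Yᵐ × X 0 → X m. -/
def piFin0 (X : ℕ → Type) (πo : ∀ n, Y → X n → X (n + 1)) :
    ∀ (m : ℕ), (Fin m → Y) → X 0 → X m
  | 0, _, x => x
  | m + 1, y, x => πo m (y 0) (piFin0 X πo m (fun i => y i.succ) x)

/-- The set Γ_n(x_n) ⊂ Y^ℕ : all infinite addresses y such that for every p ≥ n the point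
φ_{p,n}(x_n) lies in the cell C(y₁,…,y_p) = π_{p,0}({(y₁,…,y_p)} × X 0). -/
def Gamma (X : ℕ → Type) (φs : ∀ n, X n → X (n + 1)) (πo : ∀ n, Y → X n → X (n + 1))
    (n : ℕ) (xn : X n) : Set (ℕ → Y) :=
  { y | ∀ p, ∀ h : n ≤ p, ∃ x0 : X 0, phiTo X φs h xn = piFin0 X πo p (fun i : Fin p => y i.1) x0 }

/-- The relation R on Y^ℕ: related iff equal or both in some Γ_n(x_n). -/
def simRel (X : ℕ → Type) (φs : ∀ n, X n → X (n + 1)) (πo : ∀ n, Y → X n → X (n + 1)) :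
    (ℕ → Y) → (ℕ → Y) → Prop :=
  fun a b => a = b ∨ ∃ n, ∃ xn : X n, a ∈ Gamma X φs πo n xn ∧ b ∈ Gamma X φs πo n xn

variable {X : ℕ → Type}
  [TopologicalSpace Y] [CompactSpace Y] [T2Space Y]
  [∀ n, TopologicalSpace (X n)] [∀ n, CompactSpace (X n)] [∀ n, T2Space (X n)]

lemma piFin0_cont (πo : ∀ n, Y → X n → X (n + 1))
    (hπc : ∀ n, Continuous fun p : Y × X n => πo n p.1 p.2) :
    ∀ p, Continuous fun q : (Fin p → Y) × X 0 => piFin0 X πo p q.1 q.2 := by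
  intro p
  induction p with
  | zero => simpa only [piFin0] using (continuous_snd : Continuous fun q : (Fin 0 → Y) × X 0 => q.2)
  | succ p ih =>
    have e : (fun q : (Fin (p + 1) → Y) × X 0 => piFin0 X πo (p + 1) q.1 q.2)
        = fun q => πo p (q.1 0) (piFin0 X πo p (fun i : Fin p => q.1 i.succ) q.2) := by
      funext q; rfl
    rw [e]
    have c1 : Continuous fun q : (Fin (p + 1) → Y) × X 0 => q.1 0 :=
      (continuous_apply (0 : Fin (p + 1))).comp continuous_fst
    have c2 : Continuous fun q : (Fin (p + 1) → Y) × X 0 =>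
        ((fun i : Fin p => q.1 i.succ), q.2) :=
      Continuous.prodMk (continuous_pi fun i : Fin p =>
        (continuous_apply i.succ).comp continuous_fst) continuous_snd
    exact (hπc p).comp (c1.prodMk (ih.comp c2))

lemma piFin0_peel (πo : ∀ n, Y → X n → X (n + 1))
    (hπs : ∀ n, Function.Surjective fun p : Y × X n => πo n p.1 p.2) :
    ∀ p (z : X p), ∃ (w : Fin p → Y) (x0 : X 0), z = piFin0 X πo p w x0 := by
  intro p
  induction p with
  | zero => exact fun z => ⟨Fin.elim0, z, rfl⟩
  | succ p ih =>
    intro z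
    obtain ⟨⟨y, x⟩, hx⟩ := hπs p z
    obtain ⟨w, x0, hw⟩ := ih x
    refine ⟨(Fin.cons y w : Fin (p + 1) → Y), x0, ?_⟩
    have e : piFin0 X πo (p + 1) (Fin.cons y w : Fin (p + 1) → Y) x0
        = πo p ((Fin.cons y w : Fin (p + 1) → Y) 0)
            (piFin0 X πo p (fun i : Fin p => (Fin.cons y w : Fin (p + 1) → Y) i.succ) x0) := rfl
    rw [e]
    simp only [Fin.cons_zero, Fin.cons_succ]
    rw [← hw, ← hx]

lemma piFin0_extend (φs : ∀ n, X n → X (n + 1)) (πo : ∀ n, Y → X n → X (n + 1))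
    (hπs : ∀ n, Function.Surjective fun p : Y × X n => πo n p.1 p.2)
    (hcomm : ∀ (n : ℕ) (y : Y) (x : X n), πo (n + 1) y (φs n x) = φs (n + 1) (πo n y x)) :
    ∀ p (w : Fin p → Y) (x0 : X 0), ∃ (y : Y) (x0' : X 0),
      φs p (piFin0 X πo p w x0) = piFin0 X πo (p + 1) (Fin.snoc w y : Fin (p + 1) → Y) x0' := by
  intro p
  induction p with
  | zero =>
    intro w x0
    obtain ⟨⟨y, x0'⟩, hy⟩ := hπs 0 (φs 0 x0)
    refine ⟨y, x0', ?_⟩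
    have e : piFin0 X πo 1 (Fin.snoc w y : Fin 1 → Y) x0'
        = πo 0 ((Fin.snoc w y : Fin 1 → Y) 0)
            (piFin0 X πo 0 (fun i : Fin 0 => (Fin.snoc w y : Fin 1 → Y) i.succ) x0') := rfl
    have h0 : (Fin.snoc w y : Fin 1 → Y) 0 = y := by simp [Fin.snoc]
    rw [e, h0]
    exact hy.symm
  | succ p ih =>
    intro w x0
    obtain ⟨y, x0', hy⟩ := ih (Fin.tail w) x0
    refine ⟨y, x0', ?_⟩
    have e1 : piFin0 X πo (p + 1) w x0
        = πo p (w 0) (piFin0 X πo p (Fin.tail w) x0) := rfl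
    have e2 : piFin0 X πo (p + 2) (Fin.snoc w y : Fin (p + 2) → Y) x0'
        = πo (p + 1) ((Fin.snoc w y : Fin (p + 2) → Y) 0)
            (piFin0 X πo (p + 1)
              (fun i : Fin (p + 1) => (Fin.snoc w y : Fin (p + 2) → Y) i.succ) x0') := rfl
    have h0 : (Fin.snoc w y : Fin (p + 2) → Y) 0 = w 0 := by
      have : (0 : Fin (p + 2)) = Fin.castSucc 0 := rfl
      rw [this, Fin.snoc_castSucc]
    have htail : (fun i : Fin (p + 1) => (Fin.snoc w y : Fin (p + 2) → Y) i.succ)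
        = (Fin.snoc (Fin.tail w) y : Fin (p + 1) → Y) := by
      funext i
      refine Fin.lastCases ?_ (fun j => ?_) i
      · simp [Fin.succ_last]
      · have hs : (Fin.castSucc j).succ = Fin.castSucc j.succ := rfl
        rw [hs, Fin.snoc_castSucc, Fin.snoc_castSucc]
        rfl
    rw [e1, ← hcomm, hy, e2, h0, htail]

theorem statement_9
    (φs : ∀ n, X n → X (n + 1)) (πo : ∀ n, Y → X n → X (n + 1))
    (hφc : ∀ n, Continuous (φs n)) (hφi : ∀ n, Function.Injective (φs n))
    (hπc : ∀ n, Continuous fun p : Y × X n => πo n p.1 p.2)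
    (hπs : ∀ n, Function.Surjective fun p : Y × X n => πo n p.1 p.2)
    (hcomm : ∀ (n : ℕ) (y : Y) (x : X n), πo (n + 1) y (φs n x) = φs (n + 1) (πo n y x))
    (hquot : ∀ (n : ℕ) (y y' : Y) (ξ ξ' : X n), πo n y ξ = πo n y' ξ' → (y, ξ) ≠ (y', ξ') →
      ∃ x0 x0' : X 0, ξ = phiTo X φs (Nat.zero_le n) x0 ∧ ξ' = phiTo X φs (Nat.zero_le n) x0' ∧
        πo 0 y x0 = πo 0 y' x0')
    (n : ℕ) (xn : X n) :
    (Gamma X φs πo n xn).Nonempty ∧ IsClosed (Gamma X φs πo n xn) := by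
  constructor
  · -- Nonemptiness
    -- Data at stage k : a word of length n + k and a point of X 0 representing φ_{n+k,n}(xn)
    let T : ℕ → Type := fun k =>
      { pr : (Fin (n + k) → Y) × X 0 //
          phiTo X φs (Nat.le_add_right n k) xn = piFin0 X πo (n + k) pr.1 pr.2 }
    have base : T 0 := by
      have h := piFin0_peel πo hπs n xn
      refine ⟨⟨h.choose, h.choose_spec.choose⟩, ?_⟩
      have hw := h.choose_spec.choose_spec
      have hself : phiTo X φs (Nat.le_add_right n 0) xn = xn := Nat.leRecOn_self xn
      rw [hself]; exact hw
    have step : ∀ k (d : T k),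
        { d' : T (k + 1) // ∀ i : Fin (n + k), d'.1.1 i.castSucc = d.1.1 i } := by
      intro k d
      have h := piFin0_extend φs πo hπs hcomm (n + k) d.1.1 d.1.2
      have hy2 := h.choose_spec.choose_spec
      have hstep : phiTo X φs (Nat.le_add_right n (k + 1)) xn
          = φs (n + k) (phiTo X φs (Nat.le_add_right n k) xn) :=
        Nat.leRecOn_succ _ xn
      refine ⟨⟨⟨(Fin.snoc d.1.1 h.choose : Fin (n + k + 1) → Y), h.choose_spec.choose⟩,
        hstep.trans ((congrArg (φs (n + k)) d.2).trans hy2)⟩, fun i => ?_⟩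
      show (Fin.snoc d.1.1 h.choose : Fin (n + k + 1) → Y) i.castSucc = d.1.1 i
      rw [Fin.snoc_castSucc]
    let g : ∀ k, T k := fun k => Nat.rec base (fun k d => (step k d).1) k
    have gsucc : ∀ k, g (k + 1) = (step k (g k)).1 := fun _ => rfl
    have mono : ∀ k j, k ≤ j → ∀ (i : ℕ) (hik : i < n + k) (hij : i < n + j),
        (g j).1.1 ⟨i, hij⟩ = (g k).1.1 ⟨i, hik⟩ := by
      intro k j hkj
      induction j, hkj using Nat.le_induction with
      | base => intro i hik hij; rfl
      | succ j' hle ih =>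
        intro i hik hij
        have hij' : i < n + j' := by omega
        have hc : (⟨i, hij⟩ : Fin (n + j' + 1)) = Fin.castSucc ⟨i, hij'⟩ := rfl
        rw [gsucc j', hc, (step j' (g j')).2 ⟨i, hij'⟩]
        exact ih i hik hij'
    let yinf : ℕ → Y := fun i => (g (i + 1)).1.1 ⟨i, by omega⟩
    have words : ∀ k, (fun i : Fin (n + k) => yinf i.1) = (g k).1.1 := by
      intro k
      funext i
      show (g (i.1 + 1)).1.1 ⟨i.1, by omega⟩ = (g k).1.1 i
      rcases le_total (i.1 + 1) k with h | h
      · exact (mono (i.1 + 1) k h i.1 (by omega) i.isLt).symm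
      · exact mono k (i.1 + 1) h i.1 i.isLt (by omega)
    refine ⟨yinf, fun p hp => ?_⟩
    obtain ⟨k, rfl⟩ := Nat.exists_eq_add_of_le hp
    refine ⟨(g k).1.2, ?_⟩
    rw [words k]
    exact (g k).2
  · -- Closedness
    have hG : Gamma X φs πo n xn = ⋂ p, ⋂ (_ : n ≤ p), ⋂ (h : n ≤ p),
        (fun y : ℕ → Y => fun i : Fin p => y i.1) ⁻¹'
          {w : Fin p → Y | ∃ x0 : X 0, phiTo X φs h xn = piFin0 X πo p w x0} := by
      ext y
      simp only [Gamma, Set.mem_setOf_eq, Set.mem_iInter, Set.mem_preimage]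
      constructor
      · intro h p hp hp'; exact h p hp'
      · intro h p hp; exact h p hp hp
    rw [hG]
    refine isClosed_iInter fun p => isClosed_iInter fun hp => isClosed_iInter fun hp' => ?_
    refine IsClosed.preimage (continuous_pi fun i => continuous_apply i.1) ?_
    have himg : {w : Fin p → Y | ∃ x0 : X 0, phiTo X φs hp' xn = piFin0 X πo p w x0}
        = Prod.fst '' ((fun q : (Fin p → Y) × X 0 => piFin0 X πo p q.1 q.2) ⁻¹'
            {phiTo X φs hp' xn}) := by
      ext w
      simp only [Set.mem_setOf_eq, Set.mem_image, Set.mem_preimage, Set.mem_singleton_iff,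
        Prod.exists]
      constructor
      · rintro ⟨x0, hx0⟩; exact ⟨w, x0, hx0.symm, rfl⟩
      · rintro ⟨w', x0, hx0, rfl⟩; exact ⟨x0, hx0.symm⟩
    rw [himg]
    have hcpt : IsCompact ((fun q : (Fin p → Y) × X 0 => piFin0 X πo p q.1 q.2) ⁻¹'
        {phiTo X φs hp' xn}) :=
      ((isClosed_singleton.preimage (piFin0_cont πo hπc p)).isCompact)
    exact (hcpt.image continuous_fst).isClosed
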